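/- Every medial quandle Q with a single orbit is isomorphic to the affine (standard Alexander) quandle on the Λ-module Dis(Q); an isomorphism is induced by the map d ↦ d(q) for any fixed q ∈ Q. -/

import Mathlib

open LaurentPolynomial

set_option synthInstance.maxHeartbeats 1000000
set_option maxHeartbeats 1000000

noncomputable section

/-- The ring `Λ = ℤ[t,t⁻¹]` of Laurent polynomials with integer coefficients. -/
abbrev Λ : Type := LaurentPolynomial ℤ

/-- The variable `t ∈ Λ`. -/
abbrev tL : Λ := T 1

/-- A medial quandle structure on a type `Q`: an idempotent binary operation whose right
translations are bijections, satisfying the medial law. -/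
structure MedialQuandleStr (Q : Type*) where
  op : Q → Q → Q
  idem : ∀ x, op x x = x
  bij : ∀ y, Function.Bijective fun x => op x y
  medial : ∀ w x y z, op (op w x) (op y z) = op (op w y) (op x z)

/-- A quandle structure on a type `T`. -/
structure QuandleStr (T : Type*) where
  op : T → T → T
  idem : ∀ x, op x x = x
  bij : ∀ y, Function.Bijective fun x => op x y
  distrib : ∀ x y z, op (op x y) z = op (op x z) (op y z)

namespace MedialQuandleStr

variable {Q : Type*} (s : MedialQuandleStr Q)

/-- The translation `β_y : x ↦ x ▷ y`, as a permutation of `Q`. -/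
def β (y : Q) : Equiv.Perm Q := Equiv.ofBijective _ (s.bij y)

/-- `β(Q)`: the subgroup of permutations generated by the translations. -/
def transGroup : Subgroup (Equiv.Perm Q) := Subgroup.closure (Set.range s.β)

/-- The displacement group `Dis(Q)`, generated by the elementary displacements
`β_y β_z⁻¹`. -/
def Dis : Subgroup (Equiv.Perm Q) :=
  Subgroup.closure {d : Equiv.Perm Q | ∃ y z, d = s.β y * (s.β z)⁻¹}

/-- The orbit of `q`: the smallest subset of `Q` containing `q` and closed under the
action of `β(Q)`. -/
def orbit (q : Q) : Set Q := {x | ∃ g ∈ s.transGroup, g q = x}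

end MedialQuandleStr

namespace MedialQuandleStr

variable {Q : Type*} (s : MedialQuandleStr Q)

lemma β_apply (y x : Q) : s.β y x = s.op x y := rfl

lemma rdistrib (x a y : Q) : s.op (s.op x a) y = s.op (s.op x y) (s.op a y) := by
  have h := s.medial x a y y
  rwa [s.idem y] at h

lemma β_conj (y a : Q) : s.β y * s.β a * (s.β y)⁻¹ = s.β (s.op a y) := by
  rw [mul_inv_eq_iff_eq_mul]
  ext x
  simp only [Equiv.Perm.mul_apply, β_apply]
  exact s.rdistrib x a y

lemma β_conj' (y a : Q) : (s.β y)⁻¹ * s.β a * s.β y = s.β ((s.β y)⁻¹ a) := by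
  have h := s.β_conj y ((s.β y)⁻¹ a)
  rw [show s.op ((s.β y)⁻¹ a) y = a from (s.β y).apply_symm_apply a] at h
  rw [← h]; group

lemma gen_mem_dis (a b : Q) : s.β a * (s.β b)⁻¹ ∈ s.Dis :=
  Subgroup.subset_closure ⟨a, b, rfl⟩

lemma β_mem_trans (y : Q) : s.β y ∈ s.transGroup :=
  Subgroup.subset_closure ⟨y, rfl⟩

lemma conj_mem_dis (y : Q) {d : Equiv.Perm Q} (hd : d ∈ s.Dis) :
    s.β y * d * (s.β y)⁻¹ ∈ s.Dis ∧ (s.β y)⁻¹ * d * s.β y ∈ s.Dis := by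
  induction hd using Subgroup.closure_induction with
  | mem x hx =>
    obtain ⟨a, b, rfl⟩ := hx
    constructor
    · have h : s.β y * (s.β a * (s.β b)⁻¹) * (s.β y)⁻¹ =
          (s.β y * s.β a * (s.β y)⁻¹) * (s.β y * s.β b * (s.β y)⁻¹)⁻¹ := by group
      rw [h, s.β_conj, s.β_conj]
      exact s.gen_mem_dis _ _
    · have h : (s.β y)⁻¹ * (s.β a * (s.β b)⁻¹) * s.β y =
          ((s.β y)⁻¹ * s.β a * s.β y) * ((s.β y)⁻¹ * s.β b * s.β y)⁻¹ := by group
      rw [h, s.β_conj', s.β_conj']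
      exact s.gen_mem_dis _ _
  | one =>
    constructor
    · have h : s.β y * 1 * (s.β y)⁻¹ = 1 := by group
      rw [h]; exact one_mem _
    · have h : (s.β y)⁻¹ * 1 * s.β y = 1 := by group
      rw [h]; exact one_mem _
  | mul u v hu hv ihu ihv =>
    constructor
    · have h : s.β y * (u * v) * (s.β y)⁻¹ =
          (s.β y * u * (s.β y)⁻¹) * (s.β y * v * (s.β y)⁻¹) := by group
      rw [h]; exact mul_mem ihu.1 ihv.1
    · have h : (s.β y)⁻¹ * (u * v) * s.β y =
          ((s.β y)⁻¹ * u * s.β y) * ((s.β y)⁻¹ * v * s.β y) := by group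
      rw [h]; exact mul_mem ihu.2 ihv.2
  | inv u hu ihu =>
    constructor
    · have h : s.β y * u⁻¹ * (s.β y)⁻¹ = (s.β y * u * (s.β y)⁻¹)⁻¹ := by group
      rw [h]; exact inv_mem ihu.1
    · have h : (s.β y)⁻¹ * u⁻¹ * s.β y = ((s.β y)⁻¹ * u * s.β y)⁻¹ := by group
      rw [h]; exact inv_mem ihu.2

lemma trans_normalizes_dis {g : Equiv.Perm Q} (hg : g ∈ s.transGroup) :
    ∀ d ∈ s.Dis, g * d * g⁻¹ ∈ s.Dis ∧ g⁻¹ * d * g ∈ s.Dis := by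
  induction hg using Subgroup.closure_induction with
  | mem x hx =>
    obtain ⟨y, rfl⟩ := hx
    exact fun d hd => s.conj_mem_dis y hd
  | one =>
    intro d hd
    constructor
    · have h : 1 * d * 1⁻¹ = d := by group
      rw [h]; exact hd
    · have h : 1⁻¹ * d * 1 = d := by group
      rw [h]; exact hd
  | mul u v hu hv ihu ihv =>
    intro d hd
    constructor
    · have h : u * v * d * (u * v)⁻¹ = u * (v * d * v⁻¹) * u⁻¹ := by group
      rw [h]; exact (ihu _ (ihv d hd).1).1
    · have h : (u * v)⁻¹ * d * (u * v) = v⁻¹ * (u⁻¹ * d * u) * v := by group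
      rw [h]; exact (ihv _ (ihu d hd).2).2
  | inv u hu ihu =>
    intro d hd
    refine ⟨?_, ?_⟩
    · have h : u⁻¹ * d * u⁻¹⁻¹ = u⁻¹ * d * u := by group
      rw [h]; exact (ihu d hd).2
    · have h : u⁻¹⁻¹ * d * u⁻¹ = u * d * u⁻¹ := by group
      rw [h]; exact (ihu d hd).1

lemma β_fix (x : Q) : s.β x x = x := s.idem x

lemma β_inv_fix (x : Q) : (s.β x)⁻¹ x = x :=
  (Equiv.symm_apply_eq _).mpr (s.β_fix x).symm

lemma dis_trans (q x : Q) (hx : x ∈ s.orbit q) : ∃ d ∈ s.Dis, d q = x := by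
  obtain ⟨g, hg, rfl⟩ := hx
  induction hg using Subgroup.closure_induction with
  | mem u hu =>
    obtain ⟨y, rfl⟩ := hu
    refine ⟨s.β y * (s.β q)⁻¹, s.gen_mem_dis y q, ?_⟩
    simp only [Equiv.Perm.mul_apply, s.β_inv_fix q]
  | one => exact ⟨1, one_mem _, rfl⟩
  | mul u v hu hv ihu ihv =>
    obtain ⟨d1, hd1, h1⟩ := ihu
    obtain ⟨d2, hd2, h2⟩ := ihv
    refine ⟨(u * d2 * u⁻¹) * d1, mul_mem (s.trans_normalizes_dis hu d2 hd2).1 hd1, ?_⟩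
    simp only [Equiv.Perm.mul_apply, h1, Equiv.Perm.coe_inv, Equiv.symm_apply_apply, h2]
  | inv u hu ihu =>
    obtain ⟨d, hd, h⟩ := ihu
    refine ⟨u⁻¹ * d⁻¹ * u, (s.trans_normalizes_dis hu d⁻¹ (inv_mem hd)).2, ?_⟩
    simp only [Equiv.Perm.mul_apply, ← h, Equiv.Perm.coe_inv, Equiv.symm_apply_apply]

end MedialQuandleStr

section Construction

variable {M : Type*} [AddCommGroup M] [Module Λ M] {I : Type*}

/-- The carrier of the quandle `Q(N,(m_i),(X_i))`: the disjoint union of the quotients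
`Q_i = N/X_i`. -/
def QCar (N : Submodule Λ M) (X : I → Submodule Λ ↥N) : Type _ :=
  Σ i : I, ↥N ⧸ X i

/-- The condition `(1-t)·X_i = 0` for all `i`. -/
def annCond (N : Submodule Λ M) (X : I → Submodule Λ ↥N) : Prop :=
  ∀ i, ∀ x ∈ X i, (1 - tL) • (x : ↥N) = 0

/-- Multiplication by `1-t`, descended from `N/X_j` to `N` (well defined since
`(1-t)·X_j = 0`). -/
def oneSubT (N : Submodule Λ M) {X : I → Submodule Λ ↥N} (h : annCond N X) (j : I) :
    (↥N ⧸ X j) →ₗ[Λ] ↥N :=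
  Submodule.liftQ (X j) ((1 - tL) • (LinearMap.id : ↥N →ₗ[Λ] ↥N))
    (fun x hx => by simpa using h j x hx)

/-- The operation of `Q(N,(m_i),(X_i))`: for `x ∈ Q_i` and `y ∈ Q_j`,
`x ▷ y = m_j - m_i + t·x + (1-t)·y + X_i ∈ Q_i`. -/
def qop (N : Submodule Λ M) (m : I → M) {X : I → Submodule Λ ↥N}
    (hm : ∀ i j, m i - m j ∈ N) (h : annCond N X) :
    QCar N X → QCar N X → QCar N X :=
  fun x y =>
    ⟨x.1, Submodule.Quotient.mk (⟨m y.1 - m x.1, hm y.1 x.1⟩ : ↥N)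
        + tL • x.2 + Submodule.Quotient.mk (oneSubT N h y.1 y.2)⟩

end Construction

/-- Every medial quandle `Q` with a single orbit is isomorphic to the
affine (standard Alexander) quandle on the `Λ`-module `Dis(Q)` (presented here as an
abstract `Λ`-module `D` with a bijection `e` to `Dis(Q)` translating addition into
composition and scalar multiplication by `t` into conjugation by a translation): for any
fixed `q ∈ Q`, the map `d ↦ d(q)` is a bijection `D → Q` carrying the affine operation
`a ▷ b = t·a + (1-t)·b` to the quandle operation of `Q`. -/
theorem stmt19 {Q : Type*} (s : MedialQuandleStr Q)
    (hsingle : ∀ x y : Q, y ∈ s.orbit x)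
    {D : Type*} [AddCommGroup D] [Module Λ D]
    (e : D ≃ ↥s.Dis)
    (hadd : ∀ a b : D, (e (a + b)).val = (e a).val * (e b).val)
    (hsmul : ∀ (a : D) (q' : Q), (e (tL • a)).val = s.β q' * (e a).val * (s.β q')⁻¹)
    (q : Q) :
    Function.Bijective (fun a : D => (e a).val q) ∧
    ∀ a b : D, (e (tL • a + (1 - tL) • b)).val q = s.op ((e a).val q) ((e b).val q) := by
    classical
  have comm : ∀ u v : Equiv.Perm Q, u ∈ s.Dis → v ∈ s.Dis → u * v = v * u := by
    intro u v hu hv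
    have h1 := hadd (e.symm ⟨u, hu⟩) (e.symm ⟨v, hv⟩)
    have h2 := hadd (e.symm ⟨v, hv⟩) (e.symm ⟨u, hu⟩)
    rw [Equiv.apply_symm_apply, Equiv.apply_symm_apply] at h1 h2
    rw [add_comm] at h1
    exact h1.symm.trans h2
  have e0 : (e 0).val = 1 := by
    have h := hadd 0 0
    rw [add_zero] at h
    have h' : (e 0).val * 1 = (e 0).val * (e 0).val := by rw [mul_one]; exact h
    exact (mul_left_cancel h').symm
  have eneg : ∀ a : D, (e (-a)).val = ((e a).val)⁻¹ := by
    intro a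
    have h := hadd a (-a)
    rw [add_neg_cancel, e0] at h
    exact (inv_eq_of_mul_eq_one_right h.symm).symm
  have hDtrans : ∀ x : Q, ∃ d ∈ s.Dis, d q = x := fun x => s.dis_trans q x (hsingle q x)
  constructor
  · constructor
    · intro a b hab
      have hab' : (e a).val q = (e b).val q := hab
      apply e.injective
      apply Subtype.ext
      apply Equiv.ext
      intro x
      obtain ⟨d, hd, rfl⟩ := hDtrans x
      have h1 : (e a).val * d = d * (e a).val := comm _ _ (e a).2 hd
      have h2 : (e b).val * d = d * (e b).val := comm _ _ (e b).2 hd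
      calc (e a).val (d q) = ((e a).val * d) q := rfl
        _ = (d * (e a).val) q := by rw [h1]
        _ = d ((e a).val q) := rfl
        _ = d ((e b).val q) := by rw [hab']
        _ = ((e b).val * d) q := by rw [h2]; rfl
        _ = (e b).val (d q) := rfl
    · intro x
      obtain ⟨d, hd, hdq⟩ := hDtrans x
      exact ⟨e.symm ⟨d, hd⟩, by simp only [Equiv.apply_symm_apply]; exact hdq⟩
  · intro a b
    have hsm : tL • a + (1 - tL) • b = tL • a + (b + -(tL • b)) := by
      rw [sub_smul, one_smul, sub_eq_add_neg]
    have hE : (e (tL • a + (1 - tL) • b)).val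
        = (s.β ((e b).val q) * (e a).val * (s.β ((e b).val q))⁻¹)
          * ((e b).val * (s.β ((e b).val q) * (e b).val * (s.β ((e b).val q))⁻¹)⁻¹) := by
      rw [hsm, hadd, hadd, hsmul a ((e b).val q), eneg, hsmul b ((e b).val q)]
    have hconj := (s.trans_normalizes_dis (s.β_mem_trans ((e b).val q)) _ (e b).2).1
    have hcomm := comm _ _ (e b).2 (inv_mem hconj)
    rw [hE, hcomm]
    have hEq : (s.β ((e b).val q) * (e a).val * (s.β ((e b).val q))⁻¹)
          * ((s.β ((e b).val q) * (e b).val * (s.β ((e b).val q))⁻¹)⁻¹ * (e b).val)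
        = s.β ((e b).val q)
            * ((e a).val * (((e b).val)⁻¹ * ((s.β ((e b).val q))⁻¹ * (e b).val))) := by
      group
    rw [hEq]
    show s.β ((e b).val q)
        ((e a).val
          (((e b).val)⁻¹ ((s.β ((e b).val q))⁻¹ ((e b).val q))))
        = s.op ((e a).val q) ((e b).val q)
    rw [s.β_inv_fix, show ((e b).val)⁻¹ ((e b).val q) = q from (e b).val.symm_apply_apply q]
    rfl
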